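/- arXiv:2008.03158 — 2 statements merged into one kernel-verified Lean document; each statement's English description precedes it below -/
import Mathlib

section
/- Let (x̄, ȳ) be a feasible pair of the relaxed MPCaC problem. Then (x̄, ȳ) is AW-stationary if and only if (x̄, ȳ) is an AKKT point of the tightened problem TNLP_{I_0}(x̄, ȳ), i.e., of the problem: minimize f(x) subject to g(x) ≤ 0, h(x) = 0, θ(y) ≤ 0, x_i = 0 for i ∈ I_0, −y_i ≤ 0 for i ∈ I_{0+} ∪ I_{01}, −y_i = 0 for i ∈ I_{00} ∪ I_{±0}, y − e ≤ 0. -/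
open Filter Topology
open scoped Classical

noncomputable section

/-- `ℝⁿ` as a Euclidean space. -/
abbrev E (n : ℕ) : Type := EuclideanSpace ℝ (Fin n)

/-- The constraint function `θ(y) = n − α − eᵀ y` of the relaxed MPCaC problem. -/
def theta {n : ℕ} (α : ℕ) (y : E n) : ℝ := (n : ℝ) - (α : ℝ) - ∑ i, y i

/-- Feasibility for the relaxed MPCaC problem:
`g(x) ≤ 0, h(x) = 0, θ(y) ≤ 0, xᵢ yᵢ = 0, 0 ≤ yᵢ ≤ 1`. -/
def relFeas {n m p : ℕ} (g : E n → Fin m → ℝ) (h : E n → Fin p → ℝ) (α : ℕ)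
    (x y : E n) : Prop :=
  (∀ i, g x i ≤ 0) ∧ (∀ j, h x j = 0) ∧ theta α y ≤ 0 ∧
  (∀ i, x i * y i = 0) ∧ (∀ i, 0 ≤ y i ∧ y i ≤ 1)

/-- `∇f(x) + Σᵢ λᵍᵢ ∇gᵢ(x) + Σⱼ λʰⱼ ∇hⱼ(x)`. -/
def gradLx {n m p : ℕ} (f : E n → ℝ) (g : E n → Fin m → ℝ) (h : E n → Fin p → ℝ)
    (x : E n) (lg : Fin m → ℝ) (lh : Fin p → ℝ) : E n :=
  gradient f x + ∑ i, lg i • gradient (fun z => g z i) x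
    + ∑ j, lh j • gradient (fun z => h z j) x

/-- `i ∈ I_{0+}(x̄,ȳ) ∪ I_{01}(x̄,ȳ)`, i.e. `x̄ᵢ = 0` and (`0 < ȳᵢ < 1` or `ȳᵢ = 1`). -/
def inI0p01 {n : ℕ} (xb yb : E n) (i : Fin n) : Prop :=
  xb i = 0 ∧ ((0 < yb i ∧ yb i < 1) ∨ yb i = 1)

/-- Admissibility of the index set `I`: `I_{0+} ∪ I_{01} ⊆ I ⊆ I_0`. -/
def idxOK {n : ℕ} (xb yb : E n) (I : Finset (Fin n)) : Prop :=
  (∀ i, inI0p01 xb yb i → i ∈ I) ∧ (∀ i ∈ I, xb i = 0)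

/-- Feasibility for the tightened problem `TNLP_I(x̄,ȳ)`:
`g(x) ≤ 0, h(x) = 0, θ(y) ≤ 0, xᵢ = 0 (i ∈ I), −yᵢ ≤ 0 (i ∈ I_{0+} ∪ I_{01}),`
`−yᵢ = 0 (i ∈ I_{00} ∪ I_{±0}), y − e ≤ 0`. Note `I_{00} ∪ I_{±0} = {i | ȳᵢ = 0}`. -/
def tnlpFeas {n m p : ℕ} (g : E n → Fin m → ℝ) (h : E n → Fin p → ℝ) (α : ℕ)
    (xb yb : E n) (I : Finset (Fin n)) (x y : E n) : Prop :=
  (∀ i, g x i ≤ 0) ∧ (∀ j, h x j = 0) ∧ theta α y ≤ 0 ∧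
  (∀ i ∈ I, x i = 0) ∧
  (∀ i, inI0p01 xb yb i → -(y i) ≤ 0) ∧
  (∀ i, yb i = 0 → -(y i) = 0) ∧
  (∀ i, y i - 1 ≤ 0)

/-- `W_I`-stationarity for the relaxed MPCaC problem (Definition 2.9 of the paper). -/
def WStat {n m p : ℕ} (f : E n → ℝ) (g : E n → Fin m → ℝ) (h : E n → Fin p → ℝ)
    (α : ℕ) (xb yb : E n) (I : Finset (Fin n)) : Prop :=
  ∃ (lg : Fin m → ℝ) (lh : Fin p → ℝ) (lθ : ℝ) (lG : Fin n → ℝ) (lH lH' : Fin n → ℝ),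
    (∀ i, 0 ≤ lg i) ∧ 0 ≤ lθ ∧ (∀ i, 0 ≤ lH' i) ∧
    gradLx f g h xb lg lh + ∑ i ∈ I, lG i • EuclideanSpace.single i 1 = 0 ∧
    (∀ i, -lθ - lH i + lH' i = 0) ∧
    (∑ i, lg i * g xb i) = 0 ∧
    lθ * theta α yb = 0 ∧
    (∀ i, inI0p01 xb yb i → lH i = 0) ∧
    (∑ i, lH' i * (yb i - 1)) = 0

/-- Approximate weak (`AW`) stationarity for the relaxed MPCaC problem
(Definition 3.1 of the paper). -/
def AWStat {n m p : ℕ} (f : E n → ℝ) (g : E n → Fin m → ℝ) (h : E n → Fin p → ℝ)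
    (α : ℕ) (xb yb : E n) : Prop :=
  ∃ (x y : ℕ → E n) (lg : ℕ → Fin m → ℝ) (lh : ℕ → Fin p → ℝ) (lθ : ℕ → ℝ)
    (lG : ℕ → E n) (lH lH' : ℕ → Fin n → ℝ),
    (∀ k i, 0 ≤ lg k i) ∧ (∀ k, 0 ≤ lθ k) ∧ (∀ k i, 0 ≤ lH' k i) ∧
    Tendsto x atTop (𝓝 xb) ∧ Tendsto y atTop (𝓝 yb) ∧
    Tendsto (fun k => gradLx f g h (x k) (lg k) (lh k) + lG k) atTop (𝓝 0) ∧
    Tendsto (fun k i => -(lθ k) - lH k i + lH' k i) atTop (𝓝 (0 : Fin n → ℝ)) ∧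
    (∀ i, Tendsto (fun k => min (-(g (x k) i)) (lg k i)) atTop (𝓝 0)) ∧
    Tendsto (fun k => min (-(theta α (y k))) (lθ k)) atTop (𝓝 0) ∧
    (∀ i, Tendsto (fun k => min |x k i| |lG k i|) atTop (𝓝 0)) ∧
    (∀ i, Tendsto (fun k => min (y k i) |lH k i|) atTop (𝓝 0)) ∧
    (∀ i, Tendsto (fun k => min (1 - y k i) (lH' k i)) atTop (𝓝 0))

/-- `(x̄,ȳ)` is an AKKT point of the tightened problem `TNLP_{I₀}(x̄,ȳ)`:
minimize `f(x)` s.t. `g(x) ≤ 0`, `h(x) = 0`, `θ(y) ≤ 0`, `xᵢ = 0 (i ∈ I₀)`,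
`−yᵢ ≤ 0 (i ∈ I_{0+} ∪ I_{01})`, `−yᵢ = 0 (i ∈ I_{00} ∪ I_{±0})`, `y − e ≤ 0`.
Here `I₀ = {i | x̄ᵢ = 0}` and `I_{00} ∪ I_{±0} = {i | ȳᵢ = 0}`. -/
def AKKT_TNLP0 {n m p : ℕ} (f : E n → ℝ) (g : E n → Fin m → ℝ)
    (h : E n → Fin p → ℝ) (α : ℕ) (xb yb : E n) : Prop :=
  ∃ (x y : ℕ → E n) (μg : ℕ → Fin m → ℝ) (νh : ℕ → Fin p → ℝ) (μθ : ℕ → ℝ)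
    (νG : ℕ → Fin n → ℝ) (μH νH : ℕ → Fin n → ℝ) (μH' : ℕ → Fin n → ℝ),
    (∀ k i, 0 ≤ μg k i) ∧ (∀ k, 0 ≤ μθ k) ∧
    (∀ k i, inI0p01 xb yb i → 0 ≤ μH k i) ∧ (∀ k i, 0 ≤ μH' k i) ∧
    Tendsto x atTop (𝓝 xb) ∧ Tendsto y atTop (𝓝 yb) ∧
    -- ∇ₓ Lagrangian → 0
    Tendsto (fun k => gradLx f g h (x k) (μg k) (νh k)
        + ∑ i ∈ Finset.univ.filter (fun i => xb i = 0),
            νG k i • EuclideanSpace.single i 1) atTop (𝓝 0) ∧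
    -- ∇_y Lagrangian → 0
    Tendsto (fun k i => -(μθ k)
        - (if inI0p01 xb yb i then μH k i else 0)
        - (if yb i = 0 then νH k i else 0) + μH' k i)
      atTop (𝓝 (0 : Fin n → ℝ)) ∧
    -- approximate complementarity for the inequality constraints
    (∀ i, Tendsto (fun k => min (-(g (x k) i)) (μg k i)) atTop (𝓝 0)) ∧
    Tendsto (fun k => min (-(theta α (y k))) (μθ k)) atTop (𝓝 0) ∧
    (∀ i, inI0p01 xb yb i →
      Tendsto (fun k => min (y k i) (μH k i)) atTop (𝓝 0)) ∧
    (∀ i, Tendsto (fun k => min (1 - y k i) (μH' k i)) atTop (𝓝 0))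


private lemma awhelp_sum_single_apply {n : ℕ} (s : Finset (Fin n)) (c : Fin n → ℝ) (j : Fin n) :
    (∑ i ∈ s, c i • EuclideanSpace.single i (1:ℝ)) j = if j ∈ s then c j else 0 := by
  classical
  rw [WithLp.ofLp_sum, Finset.sum_apply]
  simp [EuclideanSpace.single_apply, Finset.sum_ite_eq' s j c]

private lemma awhelp_decomp {n : ℕ} (v : E n) :
    ∑ i, v i • EuclideanSpace.single i (1:ℝ) = v := by
  ext j
  rw [WithLp.ofLp_sum, Finset.sum_apply]
  simp [EuclideanSpace.single_apply]

private lemma awhelp_min_right {a b : ℕ → ℝ} {c : ℝ} (hc : 0 < c)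
    (ha : Tendsto a atTop (𝓝 c))
    (hmin : Tendsto (fun k => min (a k) (b k)) atTop (𝓝 0)) :
    Tendsto b atTop (𝓝 0) := by
  have h1 : ∀ᶠ k in atTop, c/2 < a k := ha.eventually (eventually_gt_nhds (by linarith))
  have h2 : ∀ᶠ k in atTop, min (a k) (b k) < c/2 := hmin.eventually (eventually_lt_nhds (by linarith))
  have h3 : ∀ᶠ k in atTop, min (a k) (b k) = b k := by
    filter_upwards [h1, h2] with k hk1 hk2
    rcases min_cases (a k) (b k) with ⟨h, _⟩ | ⟨h, _⟩
    · exfalso; rw [h] at hk2; linarith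
    · exact h
  exact hmin.congr' h3

private lemma awhelp_abs_zero {f : ℕ → ℝ} (h : Tendsto (fun k => |f k|) atTop (𝓝 0)) :
    Tendsto f atTop (𝓝 0) := by
  rw [tendsto_zero_iff_norm_tendsto_zero]; simpa using h

set_option maxHeartbeats 1600000 in
/-- Theorem 4.5 of the paper. A feasible pair `(x̄,ȳ)` of
the relaxed MPCaC problem is `AW`-stationary iff it is an AKKT point of the
tightened problem `TNLP_{I₀}(x̄,ȳ)`. -/
theorem AWStat_iff_AKKT_TNLP0 {n m p : ℕ}
    (f : E n → ℝ) (g : E n → Fin m → ℝ) (h : E n → Fin p → ℝ) (α : ℕ)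
    (hf : ContDiff ℝ 1 f) (hg : ∀ i, ContDiff ℝ 1 (fun x => g x i))
    (hh : ∀ j, ContDiff ℝ 1 (fun x => h x j)) (hα : 0 < α) (hαn : α < n)
    (xb yb : E n) (hfeas : relFeas g h α xb yb) :
    AWStat f g h α xb yb ↔ AKKT_TNLP0 f g h α xb yb := by
  classical
  obtain ⟨hgf, hhf, hθf, hxyf, hy01⟩ := hfeas
  have key : ∀ i : Fin n, ¬ inI0p01 xb yb i → yb i = 0 := by
    intro i hni
    by_contra hyb
    have hy0 : 0 < yb i := lt_of_le_of_ne (hy01 i).1 (Ne.symm hyb)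
    have hx0 : xb i = 0 := by
      rcases mul_eq_zero.mp (hxyf i) with h' | h'
      · exact h'
      · exact absurd h' hyb
    apply hni
    refine ⟨hx0, ?_⟩
    rcases lt_or_eq_of_le (hy01 i).2 with h' | h'
    · exact Or.inl ⟨hy0, h'⟩
    · exact Or.inr h'
  have keyy : ∀ i, inI0p01 xb yb i → 0 < yb i := by
    intro i hi
    rcases hi.2 with ⟨h', _⟩ | h'
    · exact h'
    · rw [h']; exact one_pos
  have keyn : ∀ i, inI0p01 xb yb i → ¬ yb i = 0 := fun i hi => ne_of_gt (keyy i hi)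
  constructor
  · rintro ⟨x, y, lg, lh, lθ, lG, lH, lH', hlg, hlθ, hlH', hx, hy, hgradx, hgrady,
      hming, hminθ, hminG, hminH, hminH'⟩
    have hxc : ∀ i, Tendsto (fun k => x k i) atTop (𝓝 (xb i)) :=
      fun i => ((EuclideanSpace.proj i).continuous.tendsto xb).comp hx
    have hyc : ∀ i, Tendsto (fun k => y k i) atTop (𝓝 (yb i)) :=
      fun i => ((EuclideanSpace.proj i).continuous.tendsto yb).comp hy
    have hgrady' : ∀ i, Tendsto (fun k => -(lθ k) - lH k i + lH' k i) atTop (𝓝 0) := by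
      intro i
      have := tendsto_pi_nhds.mp hgrady i
      simpa using this
    have hlG0 : ∀ i, ¬ xb i = 0 → Tendsto (fun k => lG k i) atTop (𝓝 0) := by
      intro i hi
      exact awhelp_abs_zero (awhelp_min_right (abs_pos.mpr hi) ((hxc i).abs) (hminG i))
    have hlH0 : ∀ i, inI0p01 xb yb i → Tendsto (fun k => lH k i) atTop (𝓝 0) := by
      intro i hi
      exact awhelp_abs_zero (awhelp_min_right (keyy i hi) (hyc i) (hminH i))
    refine ⟨x, y, lg, lh, lθ, (fun k i => lG k i), (fun k i => max (lH k i) 0),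
      (fun k i => lH k i), lH', hlg, hlθ, ?_, hlH', hx, hy, ?_, ?_, hming, hminθ, ?_, hminH'⟩
    · intro k i _; exact le_max_right _ _
    · -- x-gradient
      have hcorr : Tendsto (fun k => ∑ i ∈ Finset.univ.filter (fun i => ¬ xb i = 0),
          lG k i • EuclideanSpace.single i (1:ℝ)) atTop (𝓝 0) := by
        have : Tendsto (fun k => ∑ i ∈ Finset.univ.filter (fun i => ¬ xb i = 0),
            lG k i • EuclideanSpace.single i (1:ℝ)) atTop
            (𝓝 (∑ i ∈ Finset.univ.filter (fun i => ¬ xb i = 0),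
              (0:ℝ) • EuclideanSpace.single i (1:ℝ))) := by
          refine tendsto_finset_sum _ (fun i hi => ?_)
          have hi' : ¬ xb i = 0 := (Finset.mem_filter.mp hi).2
          exact (hlG0 i hi').smul_const _
        simpa using this
      have heq : ∀ k, gradLx f g h (x k) (lg k) (lh k)
          + ∑ i ∈ Finset.univ.filter (fun i => xb i = 0),
              lG k i • EuclideanSpace.single i (1:ℝ)
          = (gradLx f g h (x k) (lg k) (lh k) + lG k)
            - ∑ i ∈ Finset.univ.filter (fun i => ¬ xb i = 0),
              lG k i • EuclideanSpace.single i (1:ℝ) := by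
        intro k
        have hsplit := Finset.sum_filter_add_sum_filter_not Finset.univ
          (fun i => xb i = 0) (fun i => lG k i • EuclideanSpace.single i (1:ℝ))
        rw [awhelp_decomp (lG k)] at hsplit
        rw [eq_sub_iff_add_eq, add_assoc, hsplit]
      have := hgradx.sub hcorr
      rw [sub_zero] at this
      exact this.congr (fun k => (heq k).symm)
    · -- y-gradient
      rw [tendsto_pi_nhds]
      intro i
      simp only [Pi.zero_apply]
      by_cases hi : inI0p01 xb yb i
      · simp only [if_pos hi, if_neg (keyn i hi)]
        have h1 : Tendsto (fun k => (-(lθ k) - lH k i + lH' k i)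
            + (lH k i - max (lH k i) 0)) atTop (𝓝 (0 + (0 - max 0 0))) := by
          refine (hgrady' i).add (Tendsto.sub (hlH0 i hi) ?_)
          exact (hlH0 i hi).max tendsto_const_nhds
        simp only [max_self, add_zero, sub_zero, zero_add, sub_self, zero_sub, neg_zero] at h1
        refine h1.congr (fun k => by ring)
      · simp only [if_neg hi, if_pos (key i hi)]
        exact (hgrady' i).congr (fun k => by ring)
    · -- min(y, μH) for inI0p01
      intro i hi
      have hmax : Tendsto (fun k => max (lH k i) 0) atTop (𝓝 (max 0 0)) :=
        (hlH0 i hi).max tendsto_const_nhds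
      rw [max_self] at hmax
      have := (hyc i).min hmax
      rwa [min_eq_right (le_of_lt (keyy i hi))] at this
  · rintro ⟨x, y, μg, νh, μθ, νG, μH, νH, μH', hμg, hμθ, hμH, hμH', hx, hy, hgradx, hgrady,
      hming, hminθ, hminH, hminH'⟩
    have hxc : ∀ i, Tendsto (fun k => x k i) atTop (𝓝 (xb i)) :=
      fun i => ((EuclideanSpace.proj i).continuous.tendsto xb).comp hx
    have hyc : ∀ i, Tendsto (fun k => y k i) atTop (𝓝 (yb i)) :=
      fun i => ((EuclideanSpace.proj i).continuous.tendsto yb).comp hy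
    refine ⟨x, y, μg, νh, μθ,
      (fun k => ∑ i ∈ Finset.univ.filter (fun i => xb i = 0),
        νG k i • EuclideanSpace.single i (1:ℝ)),
      (fun k i => (if inI0p01 xb yb i then μH k i else 0)
        + (if yb i = 0 then νH k i else 0)),
      μH', hμg, hμθ, hμH', hx, hy, hgradx, ?_, hming, hminθ, ?_, ?_, hminH'⟩
    · -- y-gradient
      refine hgrady.congr (fun k => ?_)
      funext i
      ring
    · -- min(|x|, |lG|)
      intro i
      have hcomp : ∀ k, (∑ j ∈ Finset.univ.filter (fun j => xb j = 0),
          νG k j • EuclideanSpace.single j (1:ℝ)) i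
          = if xb i = 0 then νG k i else 0 := by
        intro k
        rw [awhelp_sum_single_apply]
        simp
      by_cases hi : xb i = 0
      · have hupper : Tendsto (fun k => |x k i|) atTop (𝓝 0) := by
          have := (hxc i).abs
          rwa [hi, abs_zero] at this
        refine tendsto_of_tendsto_of_tendsto_of_le_of_le tendsto_const_nhds hupper
          (fun k => le_min (abs_nonneg _) (abs_nonneg _)) (fun k => min_le_left _ _)
      · have : ∀ k, min |x k i| |(∑ j ∈ Finset.univ.filter (fun j => xb j = 0),
            νG k j • EuclideanSpace.single j (1:ℝ)) i| = 0 := by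
          intro k
          rw [hcomp k, if_neg hi, abs_zero]
          exact min_eq_right (abs_nonneg _)
        rw [show (fun k => min |x k i| |(∑ j ∈ Finset.univ.filter (fun j => xb j = 0),
            νG k j • EuclideanSpace.single j (1:ℝ)) i|) = fun _ => (0:ℝ) from funext this]
        exact tendsto_const_nhds
    · -- min(y, |lH|)
      intro i
      by_cases hi : inI0p01 xb yb i
      · have heq : ∀ k, (if inI0p01 xb yb i then μH k i else 0)
            + (if yb i = 0 then νH k i else 0) = μH k i := by
          intro k; rw [if_pos hi, if_neg (keyn i hi), add_zero]
        have habs : ∀ k, |(if inI0p01 xb yb i then μH k i else 0)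
            + (if yb i = 0 then νH k i else 0)| = μH k i := by
          intro k; rw [heq k]; exact abs_of_nonneg (hμH k i hi)
        have := hminH i hi
        refine this.congr (fun k => ?_)
        rw [habs k]
      · have hyb : yb i = 0 := key i hi
        have heq : ∀ k, (if inI0p01 xb yb i then μH k i else 0)
            + (if yb i = 0 then νH k i else 0) = νH k i := by
          intro k; rw [if_neg hi, if_pos hyb, zero_add]
        have hy0 : Tendsto (fun k => y k i) atTop (𝓝 0) := by
          have := hyc i; rwa [hyb] at this
        have hylo : Tendsto (fun k => -|y k i|) atTop (𝓝 0) := by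
          have := hy0.abs.neg; simpa using this
        have hyhi : Tendsto (fun k => |y k i|) atTop (𝓝 0) := by
          simpa using hy0.abs
        refine tendsto_of_tendsto_of_tendsto_of_le_of_le hylo hyhi (fun k => ?_) (fun k => ?_)
        · rcases le_or_gt (y k i) |(if inI0p01 xb yb i then μH k i else 0)
            + (if yb i = 0 then νH k i else 0)| with h' | h'
          · rw [min_eq_left h']; exact neg_abs_le _
          · rw [min_eq_right (le_of_lt h')]
            calc -|y k i| ≤ 0 := neg_nonpos_of_nonneg (abs_nonneg _)
              _ ≤ _ := abs_nonneg _
        · exact le_trans (min_le_left _ _) (le_abs_self _)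
end
end

section
/- Consider the relaxed MPCaC problem in ℝ² with f(x) = x₂, one inequality constraint g(x) = x₁² ≤ 0, no equality constraints, and α = 1 (so θ(y) = 1 − y₁ − y₂). For every a > 0, the pair (x̄, ȳ) with x̄ = (0, a) and ȳ = (1, 0) is a PAKKT point of this problem viewed as a standard nonlinear program, but (x̄, ȳ) is not AW-stationary. -/
open Filter Topology
open scoped Classical

noncomputable section

/-- Objective of the example: `f(x) = x₂`. -/
def fEx2 : E 2 → ℝ := fun x => x 1

/-- Inequality constraint of the example: `g(x) = x₁² ≤ 0`. -/
def gEx2 : E 2 → Fin 1 → ℝ := fun x _ => (x 0) ^ 2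

/-- No equality constraints. -/
def hEx2 : E 2 → Fin 0 → ℝ := fun _ j => Fin.elim0 j

/-- `x̄ = (0, a)`. -/
def xBar (a : ℝ) : E 2 := WithLp.toLp 2 ![0, a]

/-- `ȳ = (1, 0)`. -/
def yBar : E 2 := WithLp.toLp 2 ![1, 0]


-- Auxiliary lemmas -------------------------------------------------------

lemma toDual_single (i : Fin 2) :
    (InnerProductSpace.toDual ℝ (E 2) (EuclideanSpace.single i 1)) =
      EuclideanSpace.proj i := by
  ext v
  simp [InnerProductSpace.toDual_apply_apply, EuclideanSpace.inner_single_left]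

lemma grad_coord (i : Fin 2) (x : E 2) :
    gradient (fun z : E 2 => z i) x = EuclideanSpace.single i 1 := by
  apply HasGradientAt.gradient
  rw [hasGradientAt_iff_hasFDerivAt, toDual_single]
  exact (EuclideanSpace.proj i : E 2 →L[ℝ] ℝ).hasFDerivAt

lemma grad_sq (x : E 2) :
    gradient (fun z : E 2 => (z 0) ^ 2) x = (2 * x 0) • EuclideanSpace.single 0 1 := by
  apply HasGradientAt.gradient
  rw [hasGradientAt_iff_hasFDerivAt]
  have hp : HasFDerivAt (fun z : E 2 => z 0)
      (EuclideanSpace.proj (0 : Fin 2) : E 2 →L[ℝ] ℝ) x :=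
    (EuclideanSpace.proj (0 : Fin 2) : E 2 →L[ℝ] ℝ).hasFDerivAt
  have h := hp.mul hp
  have heq : (fun z : E 2 => (z 0) ^ 2) = fun z : E 2 => z 0 * z 0 := by
    funext z; ring
  rw [heq]
  convert h using 1
  · rfl
  · funext z; simp [sq]
  ext v
  simp [InnerProductSpace.toDual_apply_apply, EuclideanSpace.inner_single_left,
    inner_smul_left]
  ring

lemma gradLx_eval (x : E 2) (lg : Fin 1 → ℝ) (lh : Fin 0 → ℝ) :
    gradLx fEx2 gEx2 hEx2 x lg lh =
      EuclideanSpace.single 1 1 + (lg 0 * (2 * x 0)) • EuclideanSpace.single 0 1 := by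
  have h1 : gradient fEx2 x = EuclideanSpace.single 1 1 := grad_coord 1 x
  have h2 : gradient (fun z => gEx2 z 0) x = (2 * x 0) • EuclideanSpace.single 0 1 :=
    grad_sq x
  unfold gradLx
  rw [Fin.sum_univ_one, h1, h2]
  simp [smul_smul]

lemma gradLx_apply_one (x : E 2) (lg : Fin 1 → ℝ) (lh : Fin 0 → ℝ) :
    (gradLx fEx2 gEx2 hEx2 x lg lh) 1 = 1 := by
  rw [gradLx_eval]
  simp [EuclideanSpace.single_apply]


lemma le_delta (c : ℝ) (X : ℝ) (hc : 0 ≤ c) : c ≤ max 1 (max |c| X) :=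
  le_trans (le_abs_self c) (le_trans (le_max_left _ _) (le_max_right _ _))

/-- Example 4.2 of the paper. For the relaxed MPCaC problem
in `ℝ²` with `f(x) = x₂`, `g(x) = x₁² ≤ 0`, no equality constraints and
`α = 1`, for every `a > 0` the pair `(x̄, ȳ) = ((0,a), (1,0))` is a PAKKT
point of the problem viewed as a standard NLP (inequality constraints
`g(x) ≤ 0`, `θ(y) ≤ 0`, `−y ≤ 0`, `y − e ≤ 0`; equality constraints
`xᵢ yᵢ = 0`), but it is not `AW`-stationary. -/
theorem example_PAKKT_not_AWStat (a : ℝ) (ha : 0 < a) :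
    (∃ (x y : ℕ → E 2) (μg : ℕ → Fin 1 → ℝ) (μθ : ℕ → ℝ)
      (μH μH' : ℕ → Fin 2 → ℝ) (νξ : ℕ → Fin 2 → ℝ) (δ : ℕ → ℝ),
      -- δₖ = ‖(1, λᵏ)‖_∞
      (∀ k, δ k = max 1 (max |μg k 0| (max |μθ k|
        (max (max |μH k 0| |μH k 1|)
          (max (max |μH' k 0| |μH' k 1|) (max |νξ k 0| |νξ k 1|)))))) ∧
      (∀ k i, 0 ≤ μg k i) ∧ (∀ k, 0 ≤ μθ k) ∧ (∀ k i, 0 ≤ μH k i) ∧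
      (∀ k i, 0 ≤ μH' k i) ∧
      Tendsto x atTop (𝓝 (xBar a)) ∧ Tendsto y atTop (𝓝 yBar) ∧
      -- ∇ₓ Lagrangian → 0
      Tendsto (fun k => gradLx fEx2 gEx2 hEx2 (x k) (μg k) (fun j => Fin.elim0 j)
          + ∑ i, (νξ k i * y k i) • EuclideanSpace.single i 1) atTop (𝓝 0) ∧
      -- ∇_y Lagrangian → 0
      Tendsto (fun k i => -(μθ k) - μH k i + μH' k i + νξ k i * x k i)
        atTop (𝓝 (0 : Fin 2 → ℝ)) ∧
      -- approximate complementarity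
      (∀ i, Tendsto (fun k => min (-(gEx2 (x k) i)) (μg k i)) atTop (𝓝 0)) ∧
      Tendsto (fun k => min (-(theta 1 (y k))) (μθ k)) atTop (𝓝 0) ∧
      (∀ i, Tendsto (fun k => min (y k i) (μH k i)) atTop (𝓝 0)) ∧
      (∀ i, Tendsto (fun k => min (1 - y k i) (μH' k i)) atTop (𝓝 0)) ∧
      -- PAKKT positivity conditions
      (∀ i, 0 < Filter.limsup (fun k => μg k i / δ k) atTop →
        ∀ k, 0 < μg k i * gEx2 (x k) i) ∧
      (0 < Filter.limsup (fun k => μθ k / δ k) atTop →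
        ∀ k, 0 < μθ k * theta 1 (y k)) ∧
      (∀ i, 0 < Filter.limsup (fun k => μH k i / δ k) atTop →
        ∀ k, 0 < μH k i * (-(y k i))) ∧
      (∀ i, 0 < Filter.limsup (fun k => μH' k i / δ k) atTop →
        ∀ k, 0 < μH' k i * (y k i - 1)) ∧
      (∀ i, 0 < Filter.limsup (fun k => |νξ k i| / δ k) atTop →
        ∀ k, 0 < νξ k i * (x k i * y k i))) ∧
    ¬ AWStat fEx2 gEx2 hEx2 1 (xBar a) yBar := by
  have t1 : Tendsto (fun k : ℕ => 1 / ((k : ℝ) + 1)) atTop (𝓝 0) :=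
    tendsto_one_div_add_atTop_nhds_zero_nat
  have hKpos : ∀ k : ℕ, (0 : ℝ) < (k : ℝ) + 1 := fun k => by positivity
  constructor
  · -- PAKKT part
    refine ⟨fun k => xBar a + (1 / ((k : ℝ) + 1) ^ 3) • EuclideanSpace.single 0 1,
      fun k => yBar + (-(1 / ((k : ℝ) + 1))) • EuclideanSpace.single 1 1,
      fun k _ => ((k : ℝ) + 1) ^ 2, fun _ => 0,
      fun k => ![0, ((k : ℝ) + 1) * a], fun _ => ![0, 0],
      fun k => ![0, (k : ℝ) + 1], _, fun k => rfl, ?_, ?_, ?_, ?_, ?_, ?_, ?_, ?_,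
      ?_, ?_, ?_, ?_, ?_, ?_, ?_, ?_, ?_⟩
    · intro k i; dsimp only; positivity
    · intro k; exact le_refl 0
    · intro k i
      fin_cases i
      · simp
      · dsimp only
        simp only [Fin.mk_one, Fin.isValue, Matrix.cons_val_one, Matrix.head_cons, Matrix.cons_val_zero]
        positivity
    · intro k i; fin_cases i <;> simp
    · -- x k → xBar a
      have h := ((t1.pow 3).smul_const
        (EuclideanSpace.single (0 : Fin 2) (1 : ℝ))).const_add (xBar a)
      simpa [div_pow] using h
    · -- y k → yBar
      have h := ((t1.neg).smul_const
        (EuclideanSpace.single (1 : Fin 2) (1 : ℝ))).const_add yBar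
      simpa using h
    · -- ∇ₓ L → 0
      have h : Tendsto (fun k : ℕ => (2 / ((k : ℝ) + 1)) •
          EuclideanSpace.single (0 : Fin 2) (1 : ℝ)) atTop (𝓝 0) := by
        have h := (t1.const_mul (2 : ℝ)).smul_const
          (EuclideanSpace.single (0 : Fin 2) (1 : ℝ))
        simpa [mul_one_div, div_eq_mul_inv] using h
      refine Tendsto.congr (fun k => ?_) h
      have hKne : ((k : ℝ) + 1) ≠ 0 := ne_of_gt (hKpos k)
      rw [gradLx_eval, Fin.sum_univ_two]
      simp [xBar, yBar, PiLp.add_apply, PiLp.smul_apply, EuclideanSpace.single_apply]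
      match_scalars <;> field_simp <;> ring
    · -- ∇_y L → 0
      have h : Tendsto (fun _ : ℕ => (0 : Fin 2 → ℝ)) atTop (𝓝 0) :=
        tendsto_const_nhds
      refine Tendsto.congr (fun k => ?_) h
      funext i
      fin_cases i <;>
        simp [xBar, PiLp.add_apply, PiLp.smul_apply, EuclideanSpace.single_apply]
    · -- min for g
      intro i
      have h : Tendsto (fun k : ℕ => -((1 / ((k : ℝ) + 1)) ^ 6)) atTop (𝓝 0) := by
        simpa using (t1.pow 6).neg
      refine Tendsto.congr (fun k => ?_) h
      have hKne : ((k : ℝ) + 1) ≠ 0 := ne_of_gt (hKpos k)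
      have hx0 : (xBar a + (1 / ((k : ℝ) + 1) ^ 3) • EuclideanSpace.single 0 1 : E 2)
          (0 : Fin 2) = 1 / ((k : ℝ) + 1) ^ 3 := by
        simp [xBar, PiLp.add_apply, PiLp.smul_apply, EuclideanSpace.single_apply]
      have hg : gEx2 (xBar a + (1 / ((k : ℝ) + 1) ^ 3) • EuclideanSpace.single 0 1) i
          = (1 / ((k : ℝ) + 1)) ^ 6 := by
        simp only [gEx2, hx0]
        field_simp
      rw [hg, min_eq_left]
      have h1 : (0 : ℝ) ≤ ((k : ℝ) + 1) ^ 2 := by positivity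
      have h2 : (0 : ℝ) ≤ (1 / ((k : ℝ) + 1)) ^ 6 := by positivity
      linarith
    · -- min for θ
      have h : Tendsto (fun k : ℕ => -(1 / ((k : ℝ) + 1))) atTop (𝓝 0) := by
        simpa using t1.neg
      refine Tendsto.congr (fun k => ?_) h
      have hθ : theta 1 (yBar + (-(1 / ((k : ℝ) + 1))) • EuclideanSpace.single 1 1)
          = 1 / ((k : ℝ) + 1) := by
        simp only [theta]
        rw [Fin.sum_univ_two]
        simp [yBar, PiLp.add_apply, PiLp.smul_apply, EuclideanSpace.single_apply]
        ring
      rw [hθ, min_eq_left]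
      have h1 : (0 : ℝ) ≤ 1 / ((k : ℝ) + 1) := by positivity
      linarith
    · -- min for y, μH
      intro i
      fin_cases i
      · refine Tendsto.congr (fun k => ?_)
          (tendsto_const_nhds : Tendsto (fun _ : ℕ => (0 : ℝ)) atTop (𝓝 0))
        have hy0 : (yBar + (-(1 / ((k : ℝ) + 1))) • EuclideanSpace.single 1 1 : E 2)
            (0 : Fin 2) = 1 := by
          simp [yBar, PiLp.add_apply, PiLp.smul_apply, EuclideanSpace.single_apply]
        show (0 : ℝ) = min ((yBar + (-(1 / ((k : ℝ) + 1))) • EuclideanSpace.single 1 1 : E 2)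
            (0 : Fin 2)) ((![0, ((k : ℝ) + 1) * a] : Fin 2 → ℝ) 0)
        rw [hy0]
        simp
      · have h : Tendsto (fun k : ℕ => -(1 / ((k : ℝ) + 1))) atTop (𝓝 0) := by
          simpa using t1.neg
        refine Tendsto.congr (fun k => ?_) h
        have hy1 : (yBar + (-(1 / ((k : ℝ) + 1))) • EuclideanSpace.single 1 1 : E 2)
            (1 : Fin 2) = -(1 / ((k : ℝ) + 1)) := by
          simp [yBar, PiLp.add_apply, PiLp.smul_apply, EuclideanSpace.single_apply]
        show -(1 / ((k : ℝ) + 1)) =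
          min ((yBar + (-(1 / ((k : ℝ) + 1))) • EuclideanSpace.single 1 1 : E 2)
            (1 : Fin 2)) ((![0, ((k : ℝ) + 1) * a] : Fin 2 → ℝ) 1)
        rw [hy1]
        simp only [Matrix.cons_val_one, Matrix.head_cons, Matrix.cons_val_zero]
        rw [min_eq_left]
        have h1 : (0 : ℝ) ≤ 1 / ((k : ℝ) + 1) := by positivity
        have h2 : (0 : ℝ) ≤ ((k : ℝ) + 1) * a := by positivity
        linarith
    · -- min for 1 - y, μH'
      intro i
      fin_cases i
      · refine Tendsto.congr (fun k => ?_)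
          (tendsto_const_nhds : Tendsto (fun _ : ℕ => (0 : ℝ)) atTop (𝓝 0))
        have hy0 : (yBar + (-(1 / ((k : ℝ) + 1))) • EuclideanSpace.single 1 1 : E 2)
            (0 : Fin 2) = 1 := by
          simp [yBar, PiLp.add_apply, PiLp.smul_apply, EuclideanSpace.single_apply]
        show (0 : ℝ) = min (1 -
            (yBar + (-(1 / ((k : ℝ) + 1))) • EuclideanSpace.single 1 1 : E 2) (0 : Fin 2))
            ((![0, 0] : Fin 2 → ℝ) 0)
        rw [hy0]
        simp
      · refine Tendsto.congr (fun k => ?_)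
          (tendsto_const_nhds : Tendsto (fun _ : ℕ => (0 : ℝ)) atTop (𝓝 0))
        have hy1 : (yBar + (-(1 / ((k : ℝ) + 1))) • EuclideanSpace.single 1 1 : E 2)
            (1 : Fin 2) = -(1 / ((k : ℝ) + 1)) := by
          simp [yBar, PiLp.add_apply, PiLp.smul_apply, EuclideanSpace.single_apply]
        show (0 : ℝ) = min (1 -
            (yBar + (-(1 / ((k : ℝ) + 1))) • EuclideanSpace.single 1 1 : E 2) (1 : Fin 2))
            ((![0, 0] : Fin 2 → ℝ) 1)
        rw [hy1]
        simp only [Matrix.cons_val_one, Matrix.head_cons, Matrix.cons_val_zero]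
        rw [min_eq_right]
        have h1 : (0 : ℝ) ≤ 1 / ((k : ℝ) + 1) := by positivity
        linarith
    · -- positivity μg
      intro i _ k
      have hx0 : (xBar a + (1 / ((k : ℝ) + 1) ^ 3) • EuclideanSpace.single 0 1 : E 2)
          (0 : Fin 2) = 1 / ((k : ℝ) + 1) ^ 3 := by
        simp [xBar, PiLp.add_apply, PiLp.smul_apply, EuclideanSpace.single_apply]
      have hKne : ((k : ℝ) + 1) ≠ 0 := ne_of_gt (hKpos k)
      simp only [gEx2, hx0]
      positivity
    · -- positivity μθ (vacuous)
      intro h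
      exact absurd h (not_lt.mpr (Filter.Tendsto.limsup_eq (by
        simpa using (tendsto_const_nhds : Tendsto (fun _ : ℕ => (0:ℝ)) atTop (𝓝 0)))).le)
    · -- positivity μH (vacuous)
      intro i hi
      exfalso
      fin_cases i
      · refine absurd hi (not_lt.mpr (Filter.Tendsto.limsup_eq ?_).le)
        refine Tendsto.congr (fun k => ?_)
          (tendsto_const_nhds : Tendsto (fun _ : ℕ => (0:ℝ)) atTop (𝓝 0))
        simp
      · refine absurd hi (not_lt.mpr (Filter.Tendsto.limsup_eq ?_).le)
        refine tendsto_of_tendsto_of_tendsto_of_le_of_le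
          (tendsto_const_nhds : Tendsto (fun _ : ℕ => (0:ℝ)) atTop (𝓝 0))
          (show Tendsto (fun k : ℕ => a * (1 / ((k : ℝ) + 1))) atTop (𝓝 0) by
            simpa using t1.const_mul a) (fun k => ?_) (fun k => ?_)
        · dsimp only
          simp only [Fin.mk_one, Fin.isValue, Matrix.cons_val_one, Matrix.head_cons, Matrix.cons_val_zero]
          exact div_nonneg (by positivity) (le_trans zero_le_one (le_max_left _ _))
        · dsimp only
          simp only [Fin.mk_one, Fin.isValue, Matrix.cons_val_one, Matrix.head_cons, Matrix.cons_val_zero]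
          have hKne : ((k : ℝ) + 1) ≠ 0 := ne_of_gt (hKpos k)
          exact le_trans
            (div_le_div_of_nonneg_left (by positivity) (by positivity)
              (le_delta (((k : ℝ) + 1) ^ 2) _ (by positivity)))
            (le_of_eq (by field_simp))
    · -- positivity μH' (vacuous)
      intro i hi
      exfalso
      fin_cases i <;>
      · refine absurd hi (not_lt.mpr (Filter.Tendsto.limsup_eq ?_).le)
        refine Tendsto.congr (fun k => ?_)
          (tendsto_const_nhds : Tendsto (fun _ : ℕ => (0:ℝ)) atTop (𝓝 0))
        simp
    · -- positivity νξ (vacuous)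
      intro i hi
      exfalso
      fin_cases i
      · refine absurd hi (not_lt.mpr (Filter.Tendsto.limsup_eq ?_).le)
        refine Tendsto.congr (fun k => ?_)
          (tendsto_const_nhds : Tendsto (fun _ : ℕ => (0:ℝ)) atTop (𝓝 0))
        simp
      · refine absurd hi (not_lt.mpr (Filter.Tendsto.limsup_eq ?_).le)
        refine tendsto_of_tendsto_of_tendsto_of_le_of_le
          (tendsto_const_nhds : Tendsto (fun _ : ℕ => (0:ℝ)) atTop (𝓝 0))
          t1 (fun k => ?_) (fun k => ?_)
        · dsimp only
          simp only [Fin.mk_one, Fin.isValue, Matrix.cons_val_one, Matrix.head_cons, Matrix.cons_val_zero]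
          exact div_nonneg (abs_nonneg _) (le_trans zero_le_one (le_max_left _ _))
        · dsimp only
          simp only [Fin.mk_one, Fin.isValue, Matrix.cons_val_one, Matrix.head_cons, Matrix.cons_val_zero]
          rw [abs_of_nonneg (le_of_lt (hKpos k))]
          have hKne : ((k : ℝ) + 1) ≠ 0 := ne_of_gt (hKpos k)
          exact le_trans
            (div_le_div_of_nonneg_left (by positivity) (by positivity)
              (le_delta (((k : ℝ) + 1) ^ 2) _ (by positivity)))
            (le_of_eq (by field_simp))
  · -- not AW-stationary
    rintro ⟨x, y, lg, lh, lθ, lG, lH, lH', hlg, hlθ, hlH', hx, hy, hgrad, hgy,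
      hmin_g, hmin_θ, hmin_G, hmin_H, hmin_H'⟩
    have hproj : Continuous fun v : E 2 => v 1 :=
      (EuclideanSpace.proj (1 : Fin 2) : E 2 →L[ℝ] ℝ).continuous
    have hx1 : Tendsto (fun k => x k 1) atTop (𝓝 a) := by
      have := (hproj.tendsto (xBar a)).comp hx
      simpa [xBar, Function.comp_def] using this
    have hgrad1 : Tendsto (fun k => (gradLx fEx2 gEx2 hEx2 (x k) (lg k) (lh k) + lG k) 1)
        atTop (𝓝 0) := by
      have := (hproj.tendsto 0).comp hgrad
      simpa [Function.comp_def] using this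
    have hkey : ∀ k, (gradLx fEx2 gEx2 hEx2 (x k) (lg k) (lh k) + lG k) 1
        = 1 + lG k 1 := by
      intro k
      have h := gradLx_apply_one (x k) (lg k) (lh k)
      calc (gradLx fEx2 gEx2 hEx2 (x k) (lg k) (lh k) + lG k) 1
          = (gradLx fEx2 gEx2 hEx2 (x k) (lg k) (lh k)) 1 + lG k 1 := rfl
        _ = 1 + lG k 1 := by rw [h]
    simp only [hkey] at hgrad1
    have hlG1 : Tendsto (fun k => lG k 1) atTop (𝓝 (-1)) := by
      have := hgrad1.sub (tendsto_const_nhds : Tendsto (fun _ : ℕ => (1:ℝ)) atTop (𝓝 1))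
      simpa using this
    have habs : Tendsto (fun k => |lG k 1|) atTop (𝓝 1) := by
      have := hlG1.abs
      simpa using this
    have hxabs : Tendsto (fun k => |x k 1|) atTop (𝓝 a) := by
      have := hx1.abs
      simpa [abs_of_pos ha] using this
    have hmin : Tendsto (fun k => min |x k 1| |lG k 1|) atTop (𝓝 (min a 1)) :=
      hxabs.min habs
    have heq := tendsto_nhds_unique (hmin_G 1) hmin
    have hpos : 0 < min a 1 := lt_min ha one_pos
    rw [← heq] at hpos
    exact lt_irrefl 0 hpos
end
end
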